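/- arXiv:math/0609276 — 2 statements merged into one kernel-verified Lean document; each statement's English description precedes it below -/
import Mathlib

section
/- Let ε ≠ 0, a ≠ 0, B, D, Ω₂, x be real numbers, let z = -(Da/ε)·exp(a(Be^{ax} + xε - Ω₂)/ε), assume z is in the domain of the Lambert W function with W(z)e^{W(z)} = z. If y = (-Be^{ax} - xε + Ω₂)/ε + (1/a)W(z), then ε(y + x) + Be^{ax} + De^{-ay} = Ω₂. -/
theorem stmt_7 (ε a B D Ω₂ x : ℝ) (hε : ε ≠ 0) (ha : a ≠ 0)
    (z : ℝ) (hz : z = -(D * a / ε) * Real.exp (a * (B * Real.exp (a * x) + x * ε - Ω₂) / ε))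
    (W : ℝ) (hW : W * Real.exp W = z)
    (y : ℝ) (hy : y = (-B * Real.exp (a * x) - x * ε + Ω₂) / ε + (1 / a) * W) :
    ε * (y + x) + B * Real.exp (a * x) + D * Real.exp (-(a * y)) = Ω₂ := by
  have hay : -(a * y) = a * (B * Real.exp (a * x) + x * ε - Ω₂) / ε + (-W) := by
    rw [hy]; field_simp; ring
  have hDE : D * Real.exp (-(a * y)) = -(ε / a) * W := by
    rw [hay, Real.exp_add]
    have hz' : W * Real.exp W = -(D * a / ε) *
        Real.exp (a * (B * Real.exp (a * x) + x * ε - Ω₂) / ε) := hz ▸ hW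
    have hEW : Real.exp (-W) = (Real.exp W)⁻¹ := Real.exp_neg W
    rw [hEW]
    field_simp
    field_simp at hz'
    rw [mul_comm ε x] at hz'
    nlinarith [hz', Real.exp_ne_zero W, Real.exp_pos W]
  rw [hDE, hy]
  field_simp
  ring
end

section
/- Let ρ, μ, α₁, H, K, σ, λ be real constants with σ ≠ 0, K ≠ 0, ρ ≠ α₁σ², and set δ = (μσ - (H + μ/K)/σ)/(ρ - α₁σ²). Then ξ(x) = δ(1 + λe^{σx}) satisfies the ODE μξ''' + ρ(ξ'² - ξξ'') + α₁(ξξ⁗ - 2ξ'ξ''' + ξ''²) - (H + μ/K)ξ' = 0 for all x ∈ ℝ. -/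
lemma exp_deriv_aux (σ c : ℝ) :
    deriv (fun x => c * Real.exp (σ * x)) = fun x => c * σ * Real.exp (σ * x) := by
  funext x
  have h : HasDerivAt (fun x => c * Real.exp (σ * x)) (c * σ * Real.exp (σ * x)) x := by
    have h1 : HasDerivAt (fun x : ℝ => σ * x) σ x := by
      simpa using (hasDerivAt_id x).const_mul σ
    have h2 := (Real.hasDerivAt_exp (σ * x)).comp x h1
    have h3 := h2.const_mul c
    refine h3.congr_deriv ?_
    ring
  exact h.deriv

theorem stmt_10 (ρ μ α₁ H K σ lam : ℝ) (hσ : σ ≠ 0) (hK : K ≠ 0)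
    (hρ : ρ ≠ α₁ * σ ^ 2)
    (δ : ℝ) (hδ : δ = (μ * σ - (H + μ / K) / σ) / (ρ - α₁ * σ ^ 2))
    (ξ : ℝ → ℝ) (hξ : ξ = fun x => δ * (1 + lam * Real.exp (σ * x))) :
    ∀ x : ℝ,
      μ * iteratedDeriv 3 ξ x +
        ρ * ((deriv ξ x) ^ 2 - ξ x * iteratedDeriv 2 ξ x) +
        α₁ * (ξ x * iteratedDeriv 4 ξ x - 2 * deriv ξ x * iteratedDeriv 3 ξ x +
          (iteratedDeriv 2 ξ x) ^ 2) -
        (H + μ / K) * deriv ξ x = 0 := by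
  intro x
  have hd1 : deriv ξ = fun x => δ * lam * σ * Real.exp (σ * x) := by
    funext y
    have h : HasDerivAt ξ (δ * lam * σ * Real.exp (σ * y)) y := by
      rw [hξ]
      have h1 : HasDerivAt (fun x : ℝ => σ * x) σ y := by
        simpa using (hasDerivAt_id y).const_mul σ
      have h2 := ((Real.hasDerivAt_exp (σ * y)).comp y h1).const_mul lam
      have h3 := (h2.const_add 1).const_mul δ
      refine h3.congr_deriv ?_
      ring
    exact h.deriv
  have hd2 : iteratedDeriv 2 ξ = fun x => δ * lam * σ ^ 2 * Real.exp (σ * x) := by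
    rw [show (2:ℕ) = 1 + 1 from rfl, iteratedDeriv_succ, iteratedDeriv_one, hd1,
      exp_deriv_aux]
    funext y; ring
  have hd3 : iteratedDeriv 3 ξ = fun x => δ * lam * σ ^ 3 * Real.exp (σ * x) := by
    rw [show (3:ℕ) = 2 + 1 from rfl, iteratedDeriv_succ, hd2, exp_deriv_aux]
    funext y; ring
  have hd4 : iteratedDeriv 4 ξ = fun x => δ * lam * σ ^ 4 * Real.exp (σ * x) := by
    rw [show (4:ℕ) = 3 + 1 from rfl, iteratedDeriv_succ, hd3, exp_deriv_aux]
    funext y; ring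
  rw [hd1, hd2, hd3, hd4, hξ]
  simp only
  have hρσ : ρ - α₁ * σ ^ 2 ≠ 0 := sub_ne_zero.mpr hρ
  have hkey2 : δ * σ * (ρ - α₁ * σ ^ 2) = μ * σ ^ 2 - (H + μ / K) := by
    rw [hδ, div_mul_eq_mul_div, div_mul_cancel₀ _ hρσ]; field_simp
  linear_combination (-(δ * lam * Real.exp (σ * x) * σ)) * hkey2
end
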